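/- For every integer n with n ≥ 6 and n ≡ 2 (mod 4), there exists a 2-subset-regular self-complementary 3-uniform hypergraph on n vertices. -/

import Mathlib

namespace SCH3

variable {m n : ℕ}

/-- Position of a vertex: its index within its side. -/
def pos (m : ℕ) {n : ℕ} (v : Fin n) : ZMod m := ((v.val / 2 : ℕ) : ZMod m)

/-- The edge predicate. -/
def edgeP (m : ℕ) {n : ℕ} (e : Finset (Fin n)) : Prop :=
  (e.filter fun v => v.val % 2 = 1).card = 0 ∨
  ((e.filter fun v => v.val % 2 = 1).card = 1 ∧
    2 * (e.filter fun v => v.val % 2 = 1).sum (pos m) =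
      (e.filter fun v => v.val % 2 = 0).sum (pos m)) ∨
  ((e.filter fun v => v.val % 2 = 1).card = 2 ∧
    2 * (e.filter fun v => v.val % 2 = 0).sum (pos m) ≠
      (e.filter fun v => v.val % 2 = 1).sum (pos m))

instance : DecidablePred (edgeP m (n := n)) := fun e => by
  unfold edgeP; infer_instance

lemma pos_inj (hn : n = 2 * m) {v w : Fin n} (hpar : v.val % 2 = w.val % 2)
    (hpos : pos m v = pos m w) : v = w := by
  have hm : 0 < m := by omega
  have hv : v.val / 2 < m := by omega
  have hw : w.val / 2 < m := by omega
  have : (pos m v).val = (pos m w).val := by rw [hpos]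
  rw [pos, pos, ZMod.val_cast_of_lt hv, ZMod.val_cast_of_lt hw] at this
  have := v.isLt; have := w.isLt
  exact Fin.ext (by omega)

/-- The permutation swapping `2k ↔ 2k+1`. -/
def tau (hn : n = 2 * m) : Equiv.Perm (Fin n) :=
  Function.Involutive.toPerm
    (fun v => ⟨v.val + 1 - 2 * (v.val % 2), by have := v.isLt; omega⟩)
    (by intro v; apply Fin.ext; simp only []; omega)

lemma tau_val (hn : n = 2 * m) (v : Fin n) :
    (tau hn v).val = v.val + 1 - 2 * (v.val % 2) := rfl

lemma tau_parity (hn : n = 2 * m) (v : Fin n) :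
    (tau hn v).val % 2 = 1 - v.val % 2 := by
  rw [tau_val]; omega

lemma pos_tau (hn : n = 2 * m) (v : Fin n) : pos m (tau hn v) = pos m v := by
  unfold pos
  rw [tau_val]
  congr 1
  omega

-- ZMod counting lemmas
lemma two_unit (hm : m % 2 = 1) : ∃ u : (ZMod m)ˣ, (u : ZMod m) = 2 := by
  refine ⟨ZMod.unitOfCoprime 2 (Nat.coprime_two_left.mpr ⟨m / 2, by omega⟩), ?_⟩
  rw [ZMod.coe_unitOfCoprime]
  norm_num

lemma two_mul_inj (hm : m % 2 = 1) {x y : ZMod m} (h : 2 * x = 2 * y) : x = y := by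
  obtain ⟨u, hu⟩ := two_unit hm
  rw [← hu] at h
  exact (Units.mul_right_inj u).mp h

lemma z_eq [NeZero m] (c : ZMod m) :
    (Finset.univ.filter fun x : ZMod m => x = c).card = 1 := by
  simp [Finset.filter_eq']

lemma z_ne [NeZero m] (c : ZMod m) :
    (Finset.univ.filter fun x : ZMod m => x ≠ c).card = m - 1 := by
  have : (Finset.univ.filter fun x : ZMod m => x ≠ c) = ({c} : Finset (ZMod m))ᶜ := by
    ext x; simp
  rw [this, Finset.card_compl, Finset.card_singleton, ZMod.card]

lemma z_ne_ne [NeZero m] {c d : ZMod m} (h : c ≠ d) :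
    (Finset.univ.filter fun x : ZMod m => x ≠ c ∧ x ≠ d).card = m - 2 := by
  have : (Finset.univ.filter fun x : ZMod m => x ≠ c ∧ x ≠ d) =
      ({c, d} : Finset (ZMod m))ᶜ := by
    ext x; simp [not_or]
  rw [this, Finset.card_compl, Finset.card_pair h, ZMod.card]

lemma z_ne_eq [NeZero m] {c d : ZMod m} (h : c ≠ d) :
    (Finset.univ.filter fun x : ZMod m => x ≠ c ∧ x = d).card = 1 := by
  have : (Finset.univ.filter fun x : ZMod m => x ≠ c ∧ x = d) = {d} := by
    ext x
    simp only [Finset.mem_filter, Finset.mem_univ, true_and, Finset.mem_singleton]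
    constructor
    · rintro ⟨-, rfl⟩; rfl
    · rintro rfl; exact ⟨h.symm, rfl⟩
  rw [this, Finset.card_singleton]

/-- Odd-side vertices with a position predicate are counted by the predicate over `ZMod m`. -/
lemma card_side_pos [NeZero m] (hn : n = 2 * m) (r : ℕ) (hr : r < 2)
    (p : ZMod m → Prop) [DecidablePred p] :
    (Finset.univ.filter fun w : Fin n => w.val % 2 = r ∧ p (pos m w)).card =
    (Finset.univ.filter p).card := by
  apply Finset.card_nbij' (i := fun w => pos m w)
    (j := fun t => ⟨2 * t.val + r, by have := ZMod.val_lt t; omega⟩)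
  · intro w hw
    simp only [Finset.coe_filter, Set.mem_setOf_eq, Finset.mem_filter, Finset.mem_univ, true_and] at hw ⊢
    exact hw.2
  · intro t ht
    simp only [Finset.coe_filter, Set.mem_setOf_eq, Finset.mem_filter, Finset.mem_univ, true_and] at ht ⊢
    have hval : (2 * t.val + r) / 2 = t.val := by omega
    have hpos : pos m (⟨2 * t.val + r, by have := ZMod.val_lt t; omega⟩ : Fin n) = t := by
      unfold pos
      simp only [hval]
      exact ZMod.natCast_rightInverse t
    refine ⟨by show (2 * t.val + r) % 2 = r; omega, by rwa [hpos]⟩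
  · intro w hw
    simp only [Finset.coe_filter, Set.mem_setOf_eq, Finset.mem_filter, Finset.mem_univ, true_and] at hw
    apply Fin.ext
    have hlt : w.val / 2 < m := by have := w.isLt; omega
    simp only [pos, ZMod.val_cast_of_lt hlt]
    omega
  · intro t ht
    have hval : (2 * t.val + r) / 2 = t.val := by omega
    unfold pos
    simp only [hval]
    exact ZMod.natCast_rightInverse t


lemma filter_image_tau (hn : n = 2 * m) (e : Finset (Fin n)) (r : ℕ) (hr : r < 2) :
    (e.image (tau hn)).filter (fun v => v.val % 2 = r) =
      (e.filter fun v => v.val % 2 = 1 - r).image (tau hn) := by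
  rw [Finset.filter_image]
  congr 1
  apply Finset.filter_congr
  intro v _
  rw [tau_parity]
  omega

lemma sum_image_tau (hn : n = 2 * m) (s : Finset (Fin n)) :
    (s.image (tau hn)).sum (pos m) = s.sum (pos m) := by
  rw [Finset.sum_image (fun x _ y _ h => (tau hn).injective h)]
  exact Finset.sum_congr rfl fun v _ => pos_tau hn v

lemma card_image_tau (hn : n = 2 * m) (s : Finset (Fin n)) :
    (s.image (tau hn)).card = s.card :=
  Finset.card_image_of_injective s (tau hn).injective

lemma tau_compl (hn : n = 2 * m) (e : Finset (Fin n)) (he : e.card = 3) :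
    (edgeP m e ↔ ¬ edgeP m (e.image (tau hn))) := by
  have h1 := filter_image_tau hn e 1 (by omega)
  have h0 := filter_image_tau hn e 0 (by omega)
  simp only [Nat.sub_self] at h1
  norm_num at h0
  have hcards : (e.filter fun v => v.val % 2 = 1).card +
      (e.filter fun v => v.val % 2 = 0).card = 3 := by
    rw [← he]
    rw [← Finset.card_filter_add_card_filter_not (s := e) (fun v => v.val % 2 = 1)]
    congr 2
    apply Finset.filter_congr
    intro v _
    constructor <;> intro <;> omega
  unfold edgeP
  rw [h1, h0]
  simp only [card_image_tau, sum_image_tau]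
  set oc := (e.filter fun v => v.val % 2 = 1).card with hoc
  set so := (e.filter fun v => v.val % 2 = 1).sum (pos m)
  set se := (e.filter fun v => v.val % 2 = 0).sum (pos m)
  have hec : (e.filter fun v => v.val % 2 = 0).card = 3 - oc := by omega
  rw [hec]
  have hoc3 : oc ≤ 3 := by omega
  interval_cases oc <;> simp <;> tauto

lemma z_two_iff (hm : m % 2 = 1) (c : ZMod m) :
    ∃ d : ZMod m, ∀ x : ZMod m, 2 * x = c ↔ x = d := by
  obtain ⟨u, hu⟩ := two_unit hm
  refine ⟨(↑u⁻¹ : ZMod m) * c, fun x => ?_⟩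
  constructor
  · rintro rfl
    rw [← hu, Units.inv_mul_cancel_left]
  · rintro rfl
    rw [← hu, Units.mul_inv_cancel_left]

lemma z_two_eq [NeZero m] (hm : m % 2 = 1) (c : ZMod m) :
    (Finset.univ.filter fun x : ZMod m => 2 * x = c).card = 1 := by
  obtain ⟨d, hd⟩ := z_two_iff hm c
  rw [Finset.filter_congr (fun x _ => hd x), z_eq]

lemma z_two_ne [NeZero m] (hm : m % 2 = 1) (c : ZMod m) :
    (Finset.univ.filter fun x : ZMod m => ¬(2 * x = c)).card = m - 1 := by
  obtain ⟨d, hd⟩ := z_two_iff hm c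
  rw [Finset.filter_congr (fun x _ => by rw [hd x] : ∀ x ∈ Finset.univ,
    (¬(2 * x = c)) ↔ x ≠ d), z_ne]

lemma edgeP_insert_odd (hn : n = 2 * m) {s : Finset (Fin n)} {w : Fin n} (hw : w ∉ s)
    (hpar : w.val % 2 = 1) :
    edgeP m (insert w s) ↔
      (((s.filter fun v => v.val % 2 = 1).card + 1 = 1 ∧
        2 * (pos m w + (s.filter fun v => v.val % 2 = 1).sum (pos m)) =
          (s.filter fun v => v.val % 2 = 0).sum (pos m)) ∨
      ((s.filter fun v => v.val % 2 = 1).card + 1 = 2 ∧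
        2 * (s.filter fun v => v.val % 2 = 0).sum (pos m) ≠
          pos m w + (s.filter fun v => v.val % 2 = 1).sum (pos m))) := by
  unfold edgeP
  rw [Finset.filter_insert, Finset.filter_insert, if_pos hpar, if_neg (by omega)]
  rw [Finset.card_insert_of_notMem (fun h => hw (Finset.mem_filter.mp h).1),
      Finset.sum_insert (fun h => hw (Finset.mem_filter.mp h).1)]
  have h0 : (s.filter fun v => v.val % 2 = 1).card + 1 ≠ 0 := by omega
  tauto

lemma edgeP_insert_even (hn : n = 2 * m) {s : Finset (Fin n)} {w : Fin n} (hw : w ∉ s)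
    (hpar : w.val % 2 = 0) :
    edgeP m (insert w s) ↔
      ((s.filter fun v => v.val % 2 = 1).card = 0 ∨
      ((s.filter fun v => v.val % 2 = 1).card = 1 ∧
        2 * (s.filter fun v => v.val % 2 = 1).sum (pos m) =
          pos m w + (s.filter fun v => v.val % 2 = 0).sum (pos m)) ∨
      ((s.filter fun v => v.val % 2 = 1).card = 2 ∧
        2 * (pos m w + (s.filter fun v => v.val % 2 = 0).sum (pos m)) ≠
          (s.filter fun v => v.val % 2 = 1).sum (pos m))) := by
  unfold edgeP
  rw [Finset.filter_insert, Finset.filter_insert, if_neg (by omega), if_pos hpar]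
  rw [Finset.sum_insert (fun h => hw (Finset.mem_filter.mp h).1)]


lemma pair_count [NeZero m] (hn : n = 2 * m) (hm : m % 2 = 1) (hm3 : 3 ≤ m)
    (s : Finset (Fin n)) (hs : s.card = 2) :
    ((Finset.univ.filter fun e : Finset (Fin n) => e.card = 3 ∧ edgeP m e).filter
      fun e => s ⊆ e).card = m - 1 := by
  classical
  -- Step 1: edges containing `s` are exactly `insert w s` for good third vertices `w`.
  have hrep : (Finset.univ.filter fun e : Finset (Fin n) => e.card = 3 ∧ edgeP m e).filter
      (fun e => s ⊆ e) =
      (Finset.univ.filter fun w : Fin n => w ∉ s ∧ edgeP m (insert w s)).image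
        (fun w => insert w s) := by
    ext e
    simp only [Finset.mem_filter, Finset.mem_image, Finset.mem_univ, true_and]
    constructor
    · rintro ⟨⟨hc3, hP⟩, hsub⟩
      have h1 : (e \ s).card = 1 := by rw [Finset.card_sdiff_of_subset hsub, hc3, hs]
      obtain ⟨w, hw⟩ := Finset.card_eq_one.mp h1
      have hwmem : w ∈ e \ s := hw ▸ Finset.mem_singleton_self w
      rw [Finset.mem_sdiff] at hwmem
      have he : insert w s = e := by
        apply Finset.eq_of_subset_of_card_le
        · intro x hx
          rcases Finset.mem_insert.mp hx with rfl | hx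
          · exact hwmem.1
          · exact hsub hx
        · rw [hc3, Finset.card_insert_of_notMem hwmem.2, hs]
      exact ⟨w, ⟨hwmem.2, he ▸ hP⟩, he⟩
    · rintro ⟨w, ⟨hws, hP⟩, rfl⟩
      have hc : (insert w s).card = 3 := by rw [Finset.card_insert_of_notMem hws, hs]
      exact ⟨⟨hc, hP⟩, Finset.subset_insert w s⟩
  have hinj : Set.InjOn (fun w => insert w s)
      ↑(Finset.univ.filter fun w : Fin n => w ∉ s ∧ edgeP m (insert w s)) := by
    intro w hw w' hw' h
    simp only [Finset.coe_filter, Set.mem_setOf_eq, Finset.mem_univ, true_and] at hw hw'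
    have h' : insert w s = insert w' s := h
    have : w ∈ insert w' s := h' ▸ Finset.mem_insert_self w s
    rcases Finset.mem_insert.mp this with h' | h'
    · exact h'
    · exact absurd h' hw.1
  rw [hrep, Finset.card_image_of_injOn hinj]
  -- Step 2: split the third-vertex count by parity.
  have hT : ∀ (q1 q0 : ZMod m → Prop), ∀ _ : DecidablePred q1, ∀ _ : DecidablePred q0,
      (∀ w : Fin n, w.val % 2 = 1 → ((w ∉ s ∧ edgeP m (insert w s)) ↔ q1 (pos m w))) →
      (∀ w : Fin n, w.val % 2 = 0 → ((w ∉ s ∧ edgeP m (insert w s)) ↔ q0 (pos m w))) →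
      (Finset.univ.filter fun w : Fin n => w ∉ s ∧ edgeP m (insert w s)).card =
        (Finset.univ.filter q1).card + (Finset.univ.filter q0).card := by
    intro q1 q0 _ _ h1 h0
    rw [← Finset.card_filter_add_card_filter_not
      (s := Finset.univ.filter fun w : Fin n => w ∉ s ∧ edgeP m (insert w s))
      (fun w : Fin n => w.val % 2 = 1), Finset.filter_filter, Finset.filter_filter]
    congr 1
    · rw [← card_side_pos hn 1 (by omega) q1]
      apply congrArg
      apply Finset.filter_congr
      intro w _
      constructor
      · rintro ⟨hP, hpar⟩; exact ⟨hpar, (h1 w hpar).mp hP⟩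
      · rintro ⟨hpar, hq⟩; exact ⟨(h1 w hpar).mpr hq, hpar⟩
    · rw [← card_side_pos hn 0 (by omega) q0]
      apply congrArg
      apply Finset.filter_congr
      intro w _
      constructor
      · rintro ⟨hP, hpar⟩
        have hpar0 : w.val % 2 = 0 := by omega
        exact ⟨hpar0, (h0 w hpar0).mp hP⟩
      · rintro ⟨hpar, hq⟩
        exact ⟨(h0 w hpar).mpr hq, by omega⟩
  -- abbreviations
  have hcards : (s.filter fun v => v.val % 2 = 1).card +
      (s.filter fun v => v.val % 2 = 0).card = 2 := by
    have heq : s.filter (fun v => v.val % 2 = 0) = s.filter (fun v => ¬ v.val % 2 = 1) :=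
      Finset.filter_congr fun v _ => by constructor <;> intro <;> omega
    rw [heq, Finset.card_filter_add_card_filter_not, hs]
  -- case on the number of odd vertices in s
  rcases (show (s.filter fun v => v.val % 2 = 1).card = 0 ∨
      (s.filter fun v => v.val % 2 = 1).card = 1 ∨
      (s.filter fun v => v.val % 2 = 1).card = 2 by omega) with hso | hso | hso
  · -- both vertices of s even
    have hsoe : s.filter (fun v => v.val % 2 = 1) = ∅ := Finset.card_eq_zero.mp hso
    have hses : s.filter (fun v => v.val % 2 = 0) = s := by
      apply Finset.eq_of_subset_of_card_le (Finset.filter_subset _ s)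
      omega
    obtain ⟨x, y, hxy, rfl⟩ := Finset.card_eq_two.mp hs
    have hxe : x.val % 2 = 0 := by
      have : x ∈ ({x, y} : Finset (Fin n)).filter (fun v => v.val % 2 = 0) := by
        rw [hses]; simp
      exact (Finset.mem_filter.mp this).2
    have hye : y.val % 2 = 0 := by
      have : y ∈ ({x, y} : Finset (Fin n)).filter (fun v => v.val % 2 = 0) := by
        rw [hses]; simp
      exact (Finset.mem_filter.mp this).2
    set a := (({x, y} : Finset (Fin n)).filter fun v => v.val % 2 = 0).sum (pos m) with ha
    have h1 : ∀ w : Fin n, w.val % 2 = 1 →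
        ((w ∉ ({x, y} : Finset (Fin n)) ∧ edgeP m (insert w {x, y})) ↔ 2 * pos m w = a) := by
      intro w hpar
      have hws : w ∉ ({x, y} : Finset (Fin n)) := by
        intro h
        rcases Finset.mem_insert.mp h with rfl | h
        · omega
        · rw [Finset.mem_singleton] at h; subst h; omega
      rw [edgeP_insert_odd hn hws hpar]
      simp only [hsoe, Finset.card_empty, Finset.sum_empty, add_zero]
      constructor
      · rintro ⟨-, h⟩
        rcases h with ⟨-, h⟩ | ⟨h, -⟩
        · exact h
        · omega
      · intro h
        exact ⟨hws, Or.inl ⟨by norm_num, h⟩⟩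
    have h0 : ∀ w : Fin n, w.val % 2 = 0 →
        ((w ∉ ({x, y} : Finset (Fin n)) ∧ edgeP m (insert w {x, y})) ↔
          (pos m w ≠ pos m x ∧ pos m w ≠ pos m y)) := by
      intro w hpar
      have hiff : w ∉ ({x, y} : Finset (Fin n)) ↔ pos m w ≠ pos m x ∧ pos m w ≠ pos m y := by
        constructor
        · intro h
          constructor
          · intro hp; exact h (by simp [pos_inj hn (by omega) hp])
          · intro hp; exact h (by simp [pos_inj hn (by omega) hp])
        · rintro ⟨h1, h2⟩ hmem
          rcases Finset.mem_insert.mp hmem with rfl | hmem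
          · exact h1 rfl
          · rw [Finset.mem_singleton] at hmem; subst hmem; exact h2 rfl
      constructor
      · rintro ⟨hws, -⟩; exact hiff.mp hws
      · intro h
        refine ⟨hiff.mpr h, ?_⟩
        rw [edgeP_insert_even hn (hiff.mpr h) hpar]
        exact Or.inl hso
    rw [hT (fun t => 2 * t = a) (fun t => t ≠ pos m x ∧ t ≠ pos m y)
      inferInstance inferInstance h1 h0]
    rw [z_two_eq hm, z_ne_ne (fun h => hxy (pos_inj hn (hxe.trans hye.symm) h))]
    omega
  · -- one odd, one even vertex in s
    have hsec : (s.filter fun v => v.val % 2 = 0).card = 1 := by omega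
    obtain ⟨y, hy⟩ := Finset.card_eq_one.mp hso
    obtain ⟨x, hx⟩ := Finset.card_eq_one.mp hsec
    have hym : y ∈ s ∧ y.val % 2 = 1 := Finset.mem_filter.mp (hy ▸ Finset.mem_singleton_self y)
    have hxm : x ∈ s ∧ x.val % 2 = 0 := Finset.mem_filter.mp (hx ▸ Finset.mem_singleton_self x)
    have hmem : ∀ v ∈ s, v = x ∨ v = y := by
      intro v hv
      by_cases hp : v.val % 2 = 1
      · right
        have : v ∈ s.filter (fun v => v.val % 2 = 1) := Finset.mem_filter.mpr ⟨hv, hp⟩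
        rw [hy, Finset.mem_singleton] at this
        exact this
      · left
        have : v ∈ s.filter (fun v => v.val % 2 = 0) := Finset.mem_filter.mpr ⟨hv, by omega⟩
        rw [hx, Finset.mem_singleton] at this
        exact this
    set b := pos m y with hbdef
    set a := pos m x with hadef
    have hsums1 : (s.filter fun v => v.val % 2 = 1).sum (pos m) = b := by
      rw [hy, Finset.sum_singleton]
    have hsums0 : (s.filter fun v => v.val % 2 = 0).sum (pos m) = a := by
      rw [hx, Finset.sum_singleton]
    have hconda : ∀ z : ZMod m, 2 * a = z + b ↔ z = 2 * a - b :=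
      fun z => ⟨fun h => by rw [h]; ring, fun h => by rw [h]; ring⟩
    have hcondb : ∀ z : ZMod m, 2 * b = z + a ↔ z = 2 * b - a :=
      fun z => ⟨fun h => by rw [h]; ring, fun h => by rw [h]; ring⟩
    have h1 : ∀ w : Fin n, w.val % 2 = 1 →
        ((w ∉ s ∧ edgeP m (insert w s)) ↔ (pos m w ≠ b ∧ pos m w ≠ 2 * a - b)) := by
      intro w hpar
      have hns : w ∉ s ↔ pos m w ≠ b := by
        constructor
        · intro hw hp
          exact hw (pos_inj hn (by omega) hp ▸ hym.1)
        · intro hp hw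
          rcases hmem w hw with rfl | rfl
          · have := hxm.2; omega
          · exact hp rfl
      constructor
      · rintro ⟨hws, hP⟩
        refine ⟨hns.mp hws, ?_⟩
        rw [edgeP_insert_odd hn hws hpar, hso, hsums1, hsums0] at hP
        rcases hP with ⟨h, -⟩ | ⟨-, h⟩
        · omega
        · intro heq
          exact h ((hconda _).mpr heq)
      · rintro ⟨hb, hcnd⟩
        have hws := hns.mpr hb
        refine ⟨hws, ?_⟩
        rw [edgeP_insert_odd hn hws hpar, hso, hsums1, hsums0]
        right
        exact ⟨rfl, fun h => hcnd ((hconda _).mp h)⟩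
    have h0 : ∀ w : Fin n, w.val % 2 = 0 →
        ((w ∉ s ∧ edgeP m (insert w s)) ↔ (pos m w ≠ a ∧ pos m w = 2 * b - a)) := by
      intro w hpar
      have hns : w ∉ s ↔ pos m w ≠ a := by
        constructor
        · intro hw hp
          exact hw (pos_inj hn (by omega) hp ▸ hxm.1)
        · intro hp hw
          rcases hmem w hw with rfl | rfl
          · exact hp rfl
          · have := hym.2; omega
      constructor
      · rintro ⟨hws, hP⟩
        refine ⟨hns.mp hws, ?_⟩
        rw [edgeP_insert_even hn hws hpar, hso, hsums1, hsums0] at hP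
        rcases hP with h | ⟨-, h⟩ | ⟨h, -⟩
        · omega
        · exact (hcondb _).mp h
        · omega
      · rintro ⟨ha, hcnd⟩
        have hws := hns.mpr ha
        refine ⟨hws, ?_⟩
        rw [edgeP_insert_even hn hws hpar, hso, hsums1, hsums0]
        right; left
        exact ⟨rfl, (hcondb _).mpr hcnd⟩
    rw [hT (fun t => t ≠ b ∧ t ≠ 2 * a - b) (fun t => t ≠ a ∧ t = 2 * b - a)
      inferInstance inferInstance h1 h0]
    by_cases hab : a = b
    · have e1 : 2 * a - b = b := by rw [hab]; ring
      have e2 : 2 * b - a = a := by rw [hab]; ring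
      rw [Finset.filter_congr (fun t (_ : t ∈ Finset.univ) => by
          rw [e1]; exact and_self_iff : ∀ t ∈ Finset.univ,
          ((t ≠ b ∧ t ≠ 2 * a - b) ↔ t ≠ b)), z_ne]
      rw [Finset.filter_congr (fun t (_ : t ∈ Finset.univ) => by
          rw [e2]; exact ⟨fun h => h.1 h.2, fun h => h.elim⟩ : ∀ t ∈ Finset.univ,
          ((t ≠ a ∧ t = 2 * b - a) ↔ False)), Finset.filter_false, Finset.card_empty]
      omega
    · have e1 : b ≠ 2 * a - b := by
        intro h
        apply hab
        apply two_mul_inj hm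
        rw [(hconda b).mpr h]
        ring
      have e2 : a ≠ 2 * b - a := by
        intro h
        apply hab
        apply (two_mul_inj hm _).symm
        rw [(hcondb a).mpr h]
        ring
      rw [z_ne_ne e1, z_ne_eq e2]
      omega
  · -- both vertices of s odd
    have hsee : s.filter (fun v => v.val % 2 = 0) = ∅ := Finset.card_eq_zero.mp (by omega)
    have hsos : s.filter (fun v => v.val % 2 = 1) = s :=
      Finset.eq_of_subset_of_card_le (Finset.filter_subset _ s) (by omega)
    have hallodd : ∀ v ∈ s, v.val % 2 = 1 := by
      intro v hv
      rw [← hsos] at hv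
      exact (Finset.mem_filter.mp hv).2
    set b := (s.filter fun v => v.val % 2 = 1).sum (pos m) with hbdef
    have h1 : ∀ w : Fin n, w.val % 2 = 1 →
        ((w ∉ s ∧ edgeP m (insert w s)) ↔ False) := by
      intro w hpar
      simp only [iff_false, not_and]
      intro hws hP
      rw [edgeP_insert_odd hn hws hpar, hso] at hP
      rcases hP with ⟨h, -⟩ | ⟨h, -⟩ <;> omega
    have h0 : ∀ w : Fin n, w.val % 2 = 0 →
        ((w ∉ s ∧ edgeP m (insert w s)) ↔ ¬(2 * pos m w = b)) := by
      intro w hpar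
      have hws : w ∉ s := fun hw => by have := hallodd w hw; omega
      constructor
      · rintro ⟨-, hP⟩
        rw [edgeP_insert_even hn hws hpar, hso, hsee] at hP
        simp only [Finset.sum_empty, add_zero] at hP
        rcases hP with h | ⟨h, -⟩ | ⟨-, h⟩
        · omega
        · omega
        · exact h
      · intro h
        refine ⟨hws, ?_⟩
        rw [edgeP_insert_even hn hws hpar, hso, hsee]
        right; right
        simp only [Finset.sum_empty, add_zero]
        exact ⟨trivial, h⟩
    rw [hT (fun _ => False) (fun t => ¬(2 * t = b)) inferInstance inferInstance h1 h0]
    rw [Finset.filter_false, Finset.card_empty, z_two_ne hm]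
    omega
end SCH3

/-- For every integer `n` with `n ≥ 6` and `n ≡ 2 (mod 4)`, there exists a
2-subset-regular self-complementary 3-uniform hypergraph on `n` vertices.
A 3-uniform hypergraph on `Fin n` is a set `E` of 3-element subsets of `Fin n`;
it is self-complementary if some permutation `τ` maps edges exactly onto
non-edges (among 3-element subsets), and 2-subset-regular if every 2-element
subset of the vertex set lies in exactly `lam` edges, for some constant `lam`. -/
theorem exists_two_subset_regular_self_complementary_three_hypergraph
    (n : ℕ) (hn : 6 ≤ n) (hmod : n % 4 = 2) :
    ∃ E : Finset (Finset (Fin n)),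
      (∀ e ∈ E, e.card = 3) ∧
      (∃ τ : Equiv.Perm (Fin n), ∀ e : Finset (Fin n), e.card = 3 →
        (e ∈ E ↔ e.image τ ∉ E)) ∧
      (∃ lam : ℕ, ∀ s : Finset (Fin n), s.card = 2 →
        (E.filter (fun e => s ⊆ e)).card = lam) := by
  set m := n / 2 with hmdef
  have hm : n = 2 * m := by omega
  have hmodd : m % 2 = 1 := by omega
  have hm3 : 3 ≤ m := by omega
  haveI : NeZero m := ⟨by omega⟩
  refine ⟨Finset.univ.filter fun e : Finset (Fin n) => e.card = 3 ∧ SCH3.edgeP m e, ?_, ?_, ?_⟩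
  · intro e he
    exact (Finset.mem_filter.mp he).2.1
  · refine ⟨SCH3.tau hm, fun e he => ?_⟩
    have himg : (e.image (SCH3.tau hm)).card = 3 := by
      rw [SCH3.card_image_tau, he]
    constructor
    · intro hmem himem
      have h1 := (Finset.mem_filter.mp hmem).2.2
      have h2 := (Finset.mem_filter.mp himem).2.2
      exact (SCH3.tau_compl hm e he).mp h1 h2
    · intro hnot
      refine Finset.mem_filter.mpr ⟨Finset.mem_univ _, he, ?_⟩
      by_contra hP
      have hQ : SCH3.edgeP m (e.image (SCH3.tau hm)) := by
        by_contra hQ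
        exact hP ((SCH3.tau_compl hm e he).mpr hQ)
      exact hnot (Finset.mem_filter.mpr ⟨Finset.mem_univ _, himg, hQ⟩)
  · exact ⟨m - 1, fun s hs => SCH3.pair_count hm hmodd hm3 s hs⟩
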